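/- For every integer k ≥ 4, there exist a finite connected simple graph G and nonadjacent vertices u, v of G such that the metric dimension of G is at most k and the metric dimension of G + uv is at least (k+1)·2^{k−2} − 1. -/
import Mathlib

/-- `W` is a resolving set of `G`. -/
def IsResolving {V : Type*} (G : SimpleGraph V) (W : Set V) : Prop :=
  ∀ x y : V, x ≠ y → ∃ w ∈ W, G.dist w x ≠ G.dist w y

/-- The metric dimension of a graph, as an extended natural number: the least
cardinality of a resolving set. -/
noncomputable def metricDim {V : Type*} (G : SimpleGraph V) : ℕ∞ :=
  sInf (Set.encard '' {W : Set V | IsResolving G W})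


inductive Vtx (K : ℕ) : Type
  | u | v | h
  | c (i : Fin K) | m (i : Fin K)
  | s (φ : Fin K → Fin 3) | x2 (φ : Fin K → Fin 3) | x1 (φ : Fin K → Fin 3)
  | t (φ : Fin K → Fin 3)
  deriving DecidableEq, Fintype

def rel (K : ℕ) : Vtx K → Vtx K → Prop
  | .u, .h => True
  | .u, .c _ => True
  | .u, .m _ => True
  | .c i, .m j => i = j
  | .h, .s _ => True
  | .c i, .s φ => φ i = 0
  | .m i, .s φ => φ i = 1
  | .s φ, .x2 ψ => φ = ψ
  | .x2 φ, .x1 ψ => φ = ψ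
  | .x1 φ, .t ψ => φ = ψ
  | .t _, .v => True
  | _, _ => False

def Gr (K : ℕ) : SimpleGraph (Vtx K) := SimpleGraph.fromRel (rel K)

namespace Gr
variable {K : ℕ}

lemma adj_uh : (Gr K).Adj .u .h := by simp [Gr, rel, SimpleGraph.fromRel_adj]
lemma adj_uc (i : Fin K) : (Gr K).Adj .u (.c i) := by simp [Gr, rel, SimpleGraph.fromRel_adj]
lemma adj_um (i : Fin K) : (Gr K).Adj .u (.m i) := by simp [Gr, rel, SimpleGraph.fromRel_adj]
lemma adj_cm (i : Fin K) : (Gr K).Adj (.c i) (.m i) := by simp [Gr, rel, SimpleGraph.fromRel_adj]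
lemma adj_hs (φ : Fin K → Fin 3) : (Gr K).Adj .h (.s φ) := by
  simp [Gr, rel, SimpleGraph.fromRel_adj]
lemma adj_cs {i : Fin K} {φ : Fin K → Fin 3} (hφ : φ i = 0) : (Gr K).Adj (.c i) (.s φ) := by
  simp [Gr, rel, SimpleGraph.fromRel_adj, hφ]
lemma adj_ms {i : Fin K} {φ : Fin K → Fin 3} (hφ : φ i = 1) : (Gr K).Adj (.m i) (.s φ) := by
  simp [Gr, rel, SimpleGraph.fromRel_adj, hφ]
lemma adj_sx2 (φ : Fin K → Fin 3) : (Gr K).Adj (.s φ) (.x2 φ) := by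
  simp [Gr, rel, SimpleGraph.fromRel_adj]
lemma adj_x2x1 (φ : Fin K → Fin 3) : (Gr K).Adj (.x2 φ) (.x1 φ) := by
  simp [Gr, rel, SimpleGraph.fromRel_adj]
lemma adj_x1t (φ : Fin K → Fin 3) : (Gr K).Adj (.x1 φ) (.t φ) := by
  simp [Gr, rel, SimpleGraph.fromRel_adj]
lemma adj_tv (φ : Fin K → Fin 3) : (Gr K).Adj (.t φ) .v := by
  simp [Gr, rel, SimpleGraph.fromRel_adj]

lemma not_adj_uv : ¬ (Gr K).Adj .u .v := by simp [Gr, rel, SimpleGraph.fromRel_adj]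

end Gr

/-- level potential: the distance from `u`. -/
def lam {K : ℕ} : Vtx K → ℕ
  | .u => 0 | .h => 1 | .c _ => 1 | .m _ => 1
  | .s _ => 2 | .x2 _ => 3 | .x1 _ => 4 | .t _ => 5 | .v => 6

/-- potential: the distance from `c j`. -/
def mu {K : ℕ} (j : Fin K) : Vtx K → ℕ
  | .u => 1 | .h => 2
  | .c i => if i = j then 0 else 2
  | .m i => if i = j then 1 else 2
  | .s φ => (φ j).val + 1
  | .x2 φ => (φ j).val + 2
  | .x1 φ => (φ j).val + 3
  | .t φ => (φ j).val + 4
  | .v => 5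

lemma lam_lip {K : ℕ} : ∀ a b : Vtx K, (Gr K).Adj a b → lam a ≤ lam b + 1 := by
  intro a b hab
  rw [Gr, SimpleGraph.fromRel_adj] at hab
  obtain ⟨-, hr | hr⟩ := hab <;> cases a <;> cases b <;>
    simp_all [rel, lam]

lemma mu_lip {K : ℕ} (j : Fin K) : ∀ a b : Vtx K, (Gr K).Adj a b → mu j a ≤ mu j b + 1 := by
  intro a b hab
  rw [Gr, SimpleGraph.fromRel_adj] at hab
  obtain ⟨-, hr | hr⟩ := hab <;> cases a <;> cases b <;>
    simp_all [rel, mu] <;>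
    first
      | omega
      | (split_ifs <;> (try simp_all) <;> omega)

/-! ### Potential machinery -/

lemma pot_walk {V : Type*} {G : SimpleGraph V} {f : V → ℕ}
    (hf : ∀ a b, G.Adj a b → f a ≤ f b + 1) {a b : V} (p : G.Walk a b) :
    f a ≤ f b + p.length := by
  induction p with
  | nil => simp
  | cons hadj p ih =>
      have := hf _ _ hadj
      simp only [SimpleGraph.Walk.length_cons]
      omega

lemma pot_dist {V : Type*} {G : SimpleGraph V} {f : V → ℕ}
    (hf : ∀ a b, G.Adj a b → f a ≤ f b + 1) {a b : V} (hr : G.Reachable a b) :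
    f a ≤ f b + G.dist a b := by
  obtain ⟨p, hp⟩ := hr.exists_walk_length_eq_dist
  simpa [hp] using pot_walk hf p

namespace Gr
variable {K : ℕ}

open SimpleGraph Walk in
/-- A walk from `u` to any vertex realizing `lam`. -/
def wU : (x : Vtx K) → (Gr K).Walk .u x
  | .u => .nil
  | .h => (adj_uh).toWalk
  | .c i => (adj_uc i).toWalk
  | .m i => (adj_um i).toWalk
  | .s φ => .cons adj_uh (adj_hs φ).toWalk
  | .x2 φ => .cons adj_uh (.cons (adj_hs φ) (adj_sx2 φ).toWalk)
  | .x1 φ => .cons adj_uh (.cons (adj_hs φ) (.cons (adj_sx2 φ) (adj_x2x1 φ).toWalk))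
  | .t φ => .cons adj_uh (.cons (adj_hs φ) (.cons (adj_sx2 φ) (.cons (adj_x2x1 φ)
      (adj_x1t φ).toWalk)))
  | .v => .cons adj_uh (.cons (adj_hs (fun _ => 0)) (.cons (adj_sx2 _) (.cons (adj_x2x1 _)
      (.cons (adj_x1t _) (adj_tv _).toWalk))))

lemma wU_length (x : Vtx K) : (wU x).length = lam x := by
  cases x <;> simp [wU, lam]

lemma connected : (Gr K).Connected := by
  rw [SimpleGraph.connected_iff]
  refine ⟨fun x y => ((wU x).reverse.append (wU y)).reachable, ⟨.u⟩⟩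

lemma dist_u (x : Vtx K) : (Gr K).dist .u x = lam x := by
  refine le_antisymm (le_trans (SimpleGraph.dist_le (wU x)) (by rw [wU_length])) ?_
  have h1 := pot_dist lam_lip ((connected).preconnected x .u)
  rw [show lam (.u : Vtx K) = 0 from rfl] at h1
  rw [SimpleGraph.dist_comm]
  omega


def wCs (j : Fin K) (φ : Fin K → Fin 3) : (Gr K).Walk (.c j) (.s φ) :=
  if h : φ j = 0 then (adj_cs h).toWalk
  else if h1 : φ j = 1 then .cons (adj_cm j) (adj_ms h1).toWalk
  else .cons (adj_uc j).symm (.cons adj_uh (adj_hs φ).toWalk)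

lemma wCs_length (j : Fin K) (φ : Fin K → Fin 3) : (wCs j φ).length = (φ j).val + 1 := by
  unfold wCs; split_ifs with h0 h1
  · simp [h0]
  · simp [h1]
  · have : (φ j).val = 2 := by
      have := (φ j).is_le
      rw [Fin.ext_iff] at h0 h1
      simp at h0 h1
      omega
    simp [this]

open SimpleGraph in
lemma dist_c (j : Fin K) (x : Vtx K) : (Gr K).dist (.c j) x = mu j x := by
  have muc : mu j (.c j : Vtx K) = 0 := by simp [mu]
  refine le_antisymm ?_ ?_
  · cases x with
    | u => exact le_trans (dist_le (adj_uc j).symm.toWalk) (by simp [mu])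
    | h => exact le_trans (dist_le (.cons (adj_uc j).symm adj_uh.toWalk)) (by simp [mu])
    | c i =>
        rcases eq_or_ne i j with h | hij
        · subst h; simp [SimpleGraph.dist_self, mu]
        · exact le_trans (dist_le (.cons (adj_uc j).symm (adj_uc i).toWalk))
            (by simp [mu, hij])
    | m i =>
        rcases eq_or_ne i j with h | hij
        · subst h; exact le_trans (dist_le (adj_cm _).toWalk) (by simp [mu])
        · exact le_trans (dist_le (.cons (adj_uc j).symm (adj_um i).toWalk))
            (by simp [mu, hij])
    | s φ => exact le_trans (dist_le (wCs j φ)) (by rw [wCs_length]; simp [mu])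
    | x2 φ =>
        exact le_trans (dist_le ((wCs j φ).concat (adj_sx2 φ)))
          (by simp [SimpleGraph.Walk.length_concat, wCs_length, mu])
    | x1 φ =>
        exact le_trans (dist_le (((wCs j φ).concat (adj_sx2 φ)).concat (adj_x2x1 φ)))
          (by simp [SimpleGraph.Walk.length_concat, wCs_length, mu])
    | t φ =>
        exact le_trans
          (dist_le ((((wCs j φ).concat (adj_sx2 φ)).concat (adj_x2x1 φ)).concat (adj_x1t φ)))
          (by simp [SimpleGraph.Walk.length_concat, wCs_length, mu])
    | v =>
        refine le_trans (dist_le (((((wCs j (fun _ => 0)).concat (adj_sx2 _)).concat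
          (adj_x2x1 _)).concat (adj_x1t _)).concat (adj_tv _))) ?_
        simp [SimpleGraph.Walk.length_concat, wCs_length, mu]
  · have h1 := pot_dist (mu_lip j) ((connected).preconnected x (.c j))
    rw [muc] at h1
    rw [SimpleGraph.dist_comm]
    omega


def W0 (K : ℕ) : Set (Vtx K) := insert .u (Set.range Vtx.c)

lemma resolving : IsResolving (Gr K) (W0 K) := by
  have hcmem : ∀ j : Fin K, (Vtx.c j : Vtx K) ∈ W0 K :=
    fun j => Set.mem_insert_iff.mpr (Or.inr ⟨j, rfl⟩)
  have humem : (Vtx.u : Vtx K) ∈ W0 K := Set.mem_insert _ _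
  intro x y hxy
  by_cases hl : lam x = lam y
  swap
  · exact ⟨.u, humem, by rw [dist_u, dist_u]; exact fun h => hl h⟩
  · revert hl hxy
    cases x <;> cases y <;> intro hxy hl <;> try (simp only [lam] at hl)
    all_goals first
      | (exfalso; omega)
      | exact absurd rfl hxy
      | (rename_i i
         refine ⟨.c i, hcmem i, ?_⟩
         rw [dist_c, dist_c]
         simp [mu]
         done)
      | (rename_i i i'
         refine ⟨.c i, hcmem i, ?_⟩
         rw [dist_c, dist_c]
         simp only [mu]
         split_ifs <;> omega)
      | (rename_i i i'
         refine ⟨.c i', hcmem i', ?_⟩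
         rw [dist_c, dist_c]
         simp only [mu]
         split_ifs <;> omega)
      | (rename_i i i'
         have hii : i' ≠ i := fun hh => hxy (by rw [hh])
         refine ⟨.c i, hcmem i, ?_⟩
         rw [dist_c, dist_c]
         simp [mu, hii]
         done)
      | (rename_i φ ψ
         obtain ⟨j, hj⟩ := Function.ne_iff.mp (fun hh => hxy (by rw [hh]) : φ ≠ ψ)
         refine ⟨.c j, hcmem j, ?_⟩
         rw [dist_c, dist_c]
         simp only [mu]
         intro hcon
         exact hj (Fin.ext (by omega)))

lemma W0_encard : (W0 K).encard ≤ (K : ℕ∞) + 1 := by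
  have h1 : (Set.range (Vtx.c : Fin K → Vtx K)).encard = (K : ℕ∞) := by
    rw [← Set.image_univ,
      Set.InjOn.encard_image (fun a _ b _ h => by injection h)]
    simp [Set.encard_univ]
  calc (W0 K).encard ≤ (Set.range (Vtx.c : Fin K → Vtx K)).encard + 1 :=
        Set.encard_insert_le _ _
    _ ≤ (K : ℕ∞) + 1 := by rw [h1]

end Gr

/-! ### The graph with the edge `uv` added -/

def GH (K : ℕ) : SimpleGraph (Vtx K) := Gr K ⊔ SimpleGraph.fromEdgeSet {s(Vtx.u, Vtx.v)}

namespace GH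
variable {K : ℕ}

lemma adj_of_G {a b : Vtx K} (hab : (Gr K).Adj a b) : (GH K).Adj a b :=
  (SimpleGraph.sup_adj _ _ _ _).mpr (Or.inl hab)

lemma adj_uv : (GH K).Adj .u .v :=
  (SimpleGraph.sup_adj _ _ _ _).mpr (Or.inr (by simp [SimpleGraph.fromEdgeSet_adj]))

lemma connected : (GH K).Connected := Gr.connected.mono le_sup_left

lemma dist_lip {a b : Vtx K} (hab : (GH K).Adj a b) :
    (GH K).dist a .v ≤ (GH K).dist b .v + 1 := by
  have htri := connected.dist_triangle (u := a) (v := b) (w := (.v : Vtx K))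
  have h1 : (GH K).dist a b ≤ 1 := by
    simpa using SimpleGraph.dist_le hab.toWalk
  omega

lemma dist_hv : (GH K).dist .h .v ≤ 2 := by
  refine le_trans (SimpleGraph.dist_le (.cons (adj_of_G Gr.adj_uh).symm adj_uv.toWalk)) ?_
  simp

lemma dist_cv (i : Fin K) : (GH K).dist (.c i) .v ≤ 2 := by
  refine le_trans (SimpleGraph.dist_le (.cons (adj_of_G (Gr.adj_uc i)).symm adj_uv.toWalk)) ?_
  simp

lemma dist_mv (i : Fin K) : (GH K).dist (.m i) .v ≤ 2 := by
  refine le_trans (SimpleGraph.dist_le (.cons (adj_of_G (Gr.adj_um i)).symm adj_uv.toWalk)) ?_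
  simp

lemma dist_tv (φ : Fin K → Fin 3) : (GH K).dist (.t φ) .v ≤ 1 := by
  simpa using SimpleGraph.dist_le (adj_of_G (Gr.adj_tv φ)).toWalk

lemma dist_pos {x : Vtx K} (hx : x ≠ .v) : 1 ≤ (GH K).dist x .v :=
  connected.pos_dist_of_ne hx

end GH

/-- The potential for the twin argument: distance to `t φ` in `GH`. -/
noncomputable def hpot {K : ℕ} (φ : Fin K → Fin 3) : Vtx K → ℕ
  | .s ψ => if ψ = φ then 3 else (GH K).dist (.s ψ) .v + 1
  | .x2 ψ => if ψ = φ then 2 else (GH K).dist (.x2 ψ) .v + 1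
  | .x1 ψ => if ψ = φ then 1 else (GH K).dist (.x1 ψ) .v + 1
  | .t ψ => if ψ = φ then 0 else (GH K).dist (.t ψ) .v + 1
  | .u => (GH K).dist .u .v + 1
  | .h => (GH K).dist .h .v + 1
  | .c i => (GH K).dist (.c i) .v + 1
  | .m i => (GH K).dist (.m i) .v + 1
  | .v => (GH K).dist .v .v + 1

lemma hpot_lip {K : ℕ} (φ : Fin K → Fin 3) :
    ∀ a b : Vtx K, (GH K).Adj a b → hpot φ a ≤ hpot φ b + 1 := by
  intro a b hab
  have hd := GH.dist_lip hab
  have hvv : (GH K).dist .v .v = 0 := by simp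
  have hbh := GH.dist_hv (K := K)
  have hph := GH.dist_pos (K := K) (x := .h) (by simp)
  rcases (SimpleGraph.sup_adj _ _ _ _).mp hab with hG | hE
  swap
  · rw [SimpleGraph.fromEdgeSet_adj] at hE
    obtain ⟨hmem, -⟩ := hE
    simp only [Set.mem_singleton_iff, Sym2.eq_iff] at hmem
    rcases hmem with ⟨rfl, rfl⟩ | ⟨rfl, rfl⟩ <;> simp only [hpot] <;> omega
  · rw [Gr, SimpleGraph.fromRel_adj] at hG
    obtain ⟨-, hr | hr⟩ := hG <;> cases a <;> cases b <;> simp_all [rel] <;>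
      first
        | (simp only [hpot]; omega)
        | (have hvv2 : (GH K).dist .v .v = 0 := by simp
           simp only [hpot]; split_ifs <;> omega)
        | (rename_i i ψ
           have h1 := GH.dist_cv (K := K) i
           have h2 := GH.dist_pos (K := K) (x := .c i) (by simp)
           have h3 := GH.dist_mv (K := K) i
           have h4 := GH.dist_pos (K := K) (x := .m i) (by simp)
           simp only [hpot]
           split_ifs <;> omega)
        | (rename_i ψ i
           have h1 := GH.dist_cv (K := K) i
           have h2 := GH.dist_pos (K := K) (x := .c i) (by simp)
           have h3 := GH.dist_mv (K := K) i
           have h4 := GH.dist_pos (K := K) (x := .m i) (by simp)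
           simp only [hpot]
           split_ifs <;> omega)

/-- The private gadget of the twin `t φ`. -/
def Dset {K : ℕ} (φ : Fin K → Fin 3) : Set (Vtx K) := {.s φ, .x2 φ, .x1 φ, .t φ}

lemma hpot_eq_of_not_mem {K : ℕ} {φ : Fin K → Fin 3} {w : Vtx K} (hw : w ∉ Dset φ) :
    hpot φ w = (GH K).dist w .v + 1 := by
  cases w <;> simp only [Dset, Set.mem_insert_iff, Set.mem_singleton_iff] at hw <;>
    simp_all [hpot]

lemma dist_t_eq {K : ℕ} {φ : Fin K → Fin 3} {w : Vtx K} (hw : w ∉ Dset φ) :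
    (GH K).dist w (.t φ) = (GH K).dist w .v + 1 := by
  refine le_antisymm ?_ ?_
  · have htri := GH.connected.dist_triangle (u := w) (v := (.v : Vtx K)) (w := (.t φ : Vtx K))
    have h1 : (GH K).dist .v (.t φ) ≤ 1 := by
      simpa using SimpleGraph.dist_le (GH.adj_of_G (Gr.adj_tv φ)).symm.toWalk
    omega
  · have hp := pot_dist (hpot_lip φ) (GH.connected.preconnected w (.t φ))
    rw [hpot_eq_of_not_mem hw] at hp
    have ht : hpot φ (.t φ : Vtx K) = 0 := by simp [hpot]
    omega

lemma Dset_index_eq {K : ℕ} {φ ψ : Fin K → Fin 3} {x : Vtx K}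
    (h1 : x ∈ Dset φ) (h2 : x ∈ Dset ψ) : φ = ψ := by
  cases x <;> simp only [Dset, Set.mem_insert_iff, Set.mem_singleton_iff] at h1 h2 <;>
    simp_all

lemma GH_resolving_lb {K : ℕ} {W : Set (Vtx K)} (hW : IsResolving (GH K) W) :
    ((3 ^ K : ℕ) : ℕ∞) ≤ W.encard + 1 := by
  classical
  set S : Set (Fin K → Fin 3) := {φ | (W ∩ Dset φ).Nonempty} with hS
  -- at most one φ can avoid W
  have hcompl : Sᶜ.Subsingleton := by
    intro φ hφ ψ hψ
    by_contra hne
    obtain ⟨w, hwW, hwd⟩ := hW (.t φ) (.t ψ) (fun hh => hne (by injection hh))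
    have hwφ : w ∉ Dset φ := fun hmem => hφ ⟨w, hwW, hmem⟩
    have hwψ : w ∉ Dset ψ := fun hmem => hψ ⟨w, hwW, hmem⟩
    rw [dist_t_eq hwφ, dist_t_eq hwψ] at hwd
    exact hwd rfl
  -- choose an element of W in each gadget
  have hmem : ∀ {φ : Fin K → Fin 3}, φ ∈ S → (W ∩ Dset φ).Nonempty := fun h => h
  have hmaps : Set.MapsTo (fun φ => if h : (W ∩ Dset φ).Nonempty then h.choose else .u) S W := by
    intro φ hφ
    have h' := hmem hφ
    simp only
    rw [dif_pos h']
    exact h'.choose_spec.1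
  have hinj : Set.InjOn (fun φ => if h : (W ∩ Dset φ).Nonempty then h.choose else .u) S := by
    intro φ hφ ψ hψ heq
    have hφ' := hmem hφ
    have hψ' := hmem hψ
    simp only at heq
    rw [dif_pos hφ', dif_pos hψ'] at heq
    exact Dset_index_eq (hφ'.choose_spec).2 (heq ▸ (hψ'.choose_spec).2)
  have hSW : S.encard ≤ W.encard := Set.encard_le_encard_of_injOn hmaps hinj
  have huniv : (Set.univ : Set (Fin K → Fin 3)).encard = ((3 ^ K : ℕ) : ℕ∞) := by
    rw [Set.encard_univ, ENat.card_eq_coe_fintype_card, Fintype.card_fun]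
    norm_num
  have hunion := Set.encard_union_le S Sᶜ
  rw [Set.union_compl_self, huniv] at hunion
  have hone : Sᶜ.encard ≤ 1 := Set.encard_le_one_iff.mpr (fun a b ha hb => hcompl ha hb)
  calc ((3 ^ K : ℕ) : ℕ∞) ≤ S.encard + Sᶜ.encard := hunion
    _ ≤ W.encard + 1 := add_le_add hSW hone

lemma nat_ineq (k : ℕ) (hk : 4 ≤ k) : (k + 1) * 2 ^ (k - 2) ≤ 3 ^ (k - 1) := by
  induction k with
  | zero => omega
  | succ n ih =>
      rcases Nat.lt_or_ge n 4 with hn | hn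
      · interval_cases n <;> simp_all <;> omega
      · have h1 := ih (by omega)
        have h2 : n - 1 = (n - 2) + 1 := by omega
        have h3 : n + 1 - 2 = (n - 2) + 1 := by omega
        have h4 : n + 1 - 1 = (n - 2) + 2 := by omega
        rw [h3, h4, pow_succ, pow_succ, pow_succ]
        rw [h2, pow_succ] at h1
        have h5 : (n + 1 + 1) * 2 ≤ 3 * (n + 1) := by omega
        calc (n + 1 + 1) * (2 ^ (n - 2) * 2) = ((n + 1 + 1) * 2) * 2 ^ (n - 2) := by ring
          _ ≤ (3 * (n + 1)) * 2 ^ (n - 2) := Nat.mul_le_mul_right _ h5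
          _ = 3 * ((n + 1) * 2 ^ (n - 2)) := by ring
          _ ≤ 3 * (3 ^ (n - 2) * 3) := Nat.mul_le_mul_left _ h1
          _ = 3 ^ (n - 2) * 3 * 3 := by ring

lemma metricDim_Gr_le (K : ℕ) : metricDim (Gr K) ≤ ((K : ℕ∞) + 1) := by
  refine le_trans (sInf_le ⟨Gr.W0 K, Gr.resolving, rfl⟩) ?_
  exact Gr.W0_encard

lemma metricDim_GH_ge (K : ℕ) : ((3 ^ K - 1 : ℕ) : ℕ∞) ≤ metricDim (GH K) := by
  refine le_sInf ?_
  rintro b ⟨W, hW, rfl⟩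
  have h1 := GH_resolving_lb hW
  have h2 : ((3 ^ K - 1 : ℕ) : ℕ∞) = ((3 ^ K : ℕ) : ℕ∞) - 1 := by
    push_cast
    rfl
  rw [h2]
  exact tsub_le_iff_right.mpr h1

/-! ### Transport along an equivalence -/

section Transport
variable {α β : Type*} (e : α ≃ β) (G : SimpleGraph β)

def toHomC : (G.comap ⇑e) →g G := ⟨⇑e, fun h => h⟩

def fromHomC : G →g (G.comap ⇑e) :=
  ⟨⇑e.symm, fun {x y} h => by simpa [SimpleGraph.comap] using h⟩

@[simp] lemma fromHomC_apply (x : β) : (fromHomC e G) x = e.symm x := rfl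
@[simp] lemma toHomC_apply (x : α) : (toHomC e G) x = e x := rfl

lemma reach_comap_iff {a b : α} :
    (G.comap ⇑e).Reachable a b ↔ G.Reachable (e a) (e b) := by
  constructor
  · intro hr
    exact hr.map (toHomC e G)
  · intro hr
    have := hr.map (fromHomC e G)
    simpa using this

lemma dist_comap_eq (a b : α) : (G.comap ⇑e).dist a b = G.dist (e a) (e b) := by
  by_cases hr : (G.comap ⇑e).Reachable a b
  · refine le_antisymm ?_ ?_
    · obtain ⟨p, hp⟩ := ((reach_comap_iff e G).mp hr).exists_walk_length_eq_dist
      have h2 := SimpleGraph.dist_le (p.map (fromHomC e G))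
      rw [SimpleGraph.Walk.length_map, hp] at h2
      simpa using h2
    · obtain ⟨p, hp⟩ := hr.exists_walk_length_eq_dist
      have h2 := SimpleGraph.dist_le (p.map (toHomC e G))
      rwa [SimpleGraph.Walk.length_map, hp] at h2
  · have hr2 : ¬ G.Reachable (e a) (e b) := fun h => hr ((reach_comap_iff e G).mpr h)
    rw [SimpleGraph.dist_eq_zero_of_not_reachable hr,
      SimpleGraph.dist_eq_zero_of_not_reachable hr2]

lemma isResolving_comap_of {W : Set β} (hW : IsResolving G W) :
    IsResolving (G.comap ⇑e) (⇑e.symm '' W) := by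
  intro x y hxy
  obtain ⟨w, hwW, hwd⟩ := hW (e x) (e y) (fun h => hxy (e.injective h))
  refine ⟨e.symm w, ⟨w, hwW, rfl⟩, ?_⟩
  rw [dist_comap_eq, dist_comap_eq]
  simpa using hwd

lemma isResolving_of_comap {W : Set α} (hW : IsResolving (G.comap ⇑e) W) :
    IsResolving G (⇑e '' W) := by
  intro x y hxy
  obtain ⟨w, hwW, hwd⟩ := hW (e.symm x) (e.symm y) (fun h => hxy (e.symm.injective h))
  refine ⟨e w, ⟨w, hwW, rfl⟩, ?_⟩
  rw [dist_comap_eq, dist_comap_eq] at hwd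
  simpa using hwd

lemma metricDim_comap_eq : metricDim (G.comap ⇑e) = metricDim G := by
  refine le_antisymm ?_ ?_
  · refine le_sInf ?_
    rintro b ⟨W, hW, rfl⟩
    calc metricDim (G.comap ⇑e) ≤ (⇑e.symm '' W).encard :=
          sInf_le ⟨_, isResolving_comap_of e G hW, rfl⟩
      _ = W.encard := (e.symm.injective.injOn).encard_image
  · refine le_sInf ?_
    rintro b ⟨W, hW, rfl⟩
    calc metricDim G ≤ (⇑e '' W).encard :=
          sInf_le ⟨_, isResolving_of_comap e G hW, rfl⟩
      _ = W.encard := (e.injective.injOn).encard_image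

lemma connected_comap (hG : G.Connected) : (G.comap ⇑e).Connected :=
  hG.map (fromHomC e G) e.symm.surjective

lemma comap_sup_edge (a b : α) :
    (G.comap ⇑e) ⊔ SimpleGraph.fromEdgeSet {s(a, b)} =
      (G ⊔ SimpleGraph.fromEdgeSet {s(e a, e b)}).comap ⇑e := by
  ext x y
  simp only [SimpleGraph.sup_adj, SimpleGraph.comap_adj, SimpleGraph.fromEdgeSet_adj,
    Set.mem_singleton_iff, Sym2.eq_iff, Equiv.apply_eq_iff_eq, ne_eq,
    EmbeddingLike.apply_eq_iff_eq]

end Transport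

/-- For every `k ≥ 4` there exist a finite connected graph `G` and a non-edge `uv`
such that `β(G) ≤ k` and `β(G + uv) ≥ (k + 1) * 2 ^ (k - 2) - 1`. -/
theorem exists_addEdge_metricDim_strong (k : ℕ) (hk : 4 ≤ k) :
    ∃ (n : ℕ) (G : SimpleGraph (Fin n)) (u v : Fin n),
      G.Connected ∧ u ≠ v ∧ ¬ G.Adj u v ∧
      metricDim G ≤ (k : ℕ∞) ∧
      (((k + 1) * 2 ^ (k - 2) - 1 : ℕ) : ℕ∞) ≤
        metricDim (G ⊔ SimpleGraph.fromEdgeSet {s(u, v)}) := by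
  classical
  set K := k - 1 with hK
  set n := Fintype.card (Vtx K) with hn
  set e : Fin n ≃ Vtx K := (Fintype.equivFin (Vtx K)).symm with he
  refine ⟨n, (Gr K).comap ⇑e, e.symm .u, e.symm .v, ?_, ?_, ?_, ?_, ?_⟩
  · exact connected_comap e _ Gr.connected
  · intro hcon
    have := e.symm.injective hcon
    simp at this
  · intro hadj
    rw [SimpleGraph.comap_adj] at hadj
    simp only [Equiv.apply_symm_apply] at hadj
    exact Gr.not_adj_uv hadj
  · rw [metricDim_comap_eq]
    refine le_trans (metricDim_Gr_le K) ?_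
    have h1 : K + 1 = k := by omega
    rw [show ((k : ℕ∞)) = ((K : ℕ∞) + 1) by exact_mod_cast congrArg (Nat.cast (R := ℕ∞)) h1.symm]
  · rw [comap_sup_edge]
    simp only [Equiv.apply_symm_apply]
    rw [metricDim_comap_eq]
    refine le_trans ?_ (metricDim_GH_ge K)
    have h2 : (k + 1) * 2 ^ (k - 2) - 1 ≤ 3 ^ K - 1 := by
      have := nat_ineq k hk
      rw [← hK] at this
      omega
    exact_mod_cast Nat.cast_le.mpr h2
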